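/- arXiv:1507.02092 — 5 statements merged into one kernel-verified Lean document; each statement's English description precedes it below -/
import Mathlib

section
/- For every natural number n, the determinant of the 22×22 symmetric integer matrix M(n) equals −(4n+3)². -/
/-- The intersection (Gram) matrix of the Néron–Severi lattice of the supersingular K3
surface $X(p)$ of Artin invariant one for $p = 4n+3$, in the basis given in the paper. -/
def M (n : ℕ) : Matrix (Fin 22) (Fin 22) ℤ :=
  Matrix.of ![
    ![-2, 1, 0, 0, 0, 0, 0, 0, 0, 0, 0, 0, 0, 0, 0, 0, 0, 0, 0, 0, (n : ℤ), (n : ℤ)],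
    ![1, 0, 1, 0, 0, 0, 0, 0, 0, 0, 0, 0, 0, 0, 0, 0, 0, 0, 0, 0, 1, 1],
    ![0, 1, -2, 1, 0, 0, 0, 0, 0, 0, 1, 0, 0, 0, 0, 0, 0, 0, 1, 0, (n : ℤ), (n : ℤ)],
    ![0, 0, 1, -2, 1, 0, 0, 0, 0, 0, 0, 0, 0, 0, 0, 0, 0, 0, 0, 0, 1, 1],
    ![0, 0, 0, 1, -2, 1, 0, 0, 0, 0, 0, 0, 0, 0, 0, 0, 0, 0, 0, 0, 0, 0],
    ![0, 0, 0, 0, 1, -2, 1, 0, 0, 0, 0, 0, 0, 0, 0, 0, 0, 0, 0, 0, 0, 0],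
    ![0, 0, 0, 0, 0, 1, -2, 1, 1, 0, 0, 0, 0, 0, 0, 0, 0, 0, 0, 0, 0, 0],
    ![0, 0, 0, 0, 0, 0, 1, -2, 0, 0, 0, 0, 0, 0, 0, 0, 0, 0, 0, 0, 0, 0],
    ![0, 0, 0, 0, 0, 0, 1, 0, -2, 1, 0, 0, 0, 0, 0, 0, 0, 0, 0, 0, 0, 0],
    ![0, 0, 0, 0, 0, 0, 0, 0, 1, -2, 0, 0, 0, 0, 0, 0, 0, 0, 0, 0, 0, 0],
    ![0, 0, 1, 0, 0, 0, 0, 0, 0, 0, -2, 1, 0, 0, 0, 0, 0, 0, 0, 0, 0, 0],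
    ![0, 0, 0, 0, 0, 0, 0, 0, 0, 0, 1, -2, 1, 0, 0, 0, 0, 0, 0, 0, 0, 0],
    ![0, 0, 0, 0, 0, 0, 0, 0, 0, 0, 0, 1, -2, 1, 0, 0, 0, 0, 0, 0, 0, 0],
    ![0, 0, 0, 0, 0, 0, 0, 0, 0, 0, 0, 0, 1, -2, 1, 1, 0, 0, 0, 0, 0, 0],
    ![0, 0, 0, 0, 0, 0, 0, 0, 0, 0, 0, 0, 0, 1, -2, 0, 0, 0, 0, 0, 0, 0],
    ![0, 0, 0, 0, 0, 0, 0, 0, 0, 0, 0, 0, 0, 1, 0, -2, 1, 0, 0, 0, 0, 0],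
    ![0, 0, 0, 0, 0, 0, 0, 0, 0, 0, 0, 0, 0, 0, 0, 1, -2, 0, 0, 0, 0, 0],
    ![0, 0, 0, 0, 0, 0, 0, 0, 0, 0, 0, 0, 0, 0, 0, 0, 0, -2, 1, 1, 0, 0],
    ![0, 0, 1, 0, 0, 0, 0, 0, 0, 0, 0, 0, 0, 0, 0, 0, 0, 1, -2, 0, 0, 0],
    ![0, 0, 0, 0, 0, 0, 0, 0, 0, 0, 0, 0, 0, 0, 0, 0, 0, 1, 0, -2, 1, 0],
    ![(n : ℤ), 1, (n : ℤ), 1, 0, 0, 0, 0, 0, 0, 0, 0, 0, 0, 0, 0, 0, 0, 0, 1, -2, (2*n : ℤ)],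
    ![(n : ℤ), 1, (n : ℤ), 1, 0, 0, 0, 0, 0, 0, 0, 0, 0, 0, 0, 0, 0, 0, 0, 0, (2*n : ℤ), -2]]

def Lmat (n : ℕ) : Matrix (Fin 22) (Fin 22) ℤ :=
  Matrix.of ![
    ![(1), 0, 0, 0, 0, 0, 0, 0, 0, 0, 0, 0, 0, 0, 0, 0, 0, 0, 0, 0, 0, 0],
    ![(-1), (-2), 0, 0, 0, 0, 0, 0, 0, 0, 0, 0, 0, 0, 0, 0, 0, 0, 0, 0, 0, 0],
    ![(1), (2), (-1), 0, 0, 0, 0, 0, 0, 0, 0, 0, 0, 0, 0, 0, 0, 0, 0, 0, 0, 0],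
    ![(-1), (-2), (1), (4), 0, 0, 0, 0, 0, 0, 0, 0, 0, 0, 0, 0, 0, 0, 0, 0, 0, 0],
    ![(1), (2), (-1), (-4), (-7), 0, 0, 0, 0, 0, 0, 0, 0, 0, 0, 0, 0, 0, 0, 0, 0, 0],
    ![(-1), (-2), (1), (4), (7), (10), 0, 0, 0, 0, 0, 0, 0, 0, 0, 0, 0, 0, 0, 0, 0, 0],
    ![(1), (2), (-1), (-4), (-7), (-10), (-13), 0, 0, 0, 0, 0, 0, 0, 0, 0, 0, 0, 0, 0, 0, 0],
    ![(-1), (-2), (1), (4), (7), (10), (13), (16), 0, 0, 0, 0, 0, 0, 0, 0, 0, 0, 0, 0, 0, 0],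
    ![(2), (4), (-2), (-8), (-14), (-20), (-26), (-13), (-19), 0, 0, 0, 0, 0, 0, 0, 0, 0, 0, 0, 0, 0],
    ![(-2), (-4), (2), (8), (14), (20), (26), (13), (19), (12), 0, 0, 0, 0, 0, 0, 0, 0, 0, 0, 0, 0],
    ![(2), (4), (-2), (-3), (-4), (-5), (-6), (-3), (-4), (-2), (-5), 0, 0, 0, 0, 0, 0, 0, 0, 0, 0, 0],
    ![(-2), (-4), (2), (3), (4), (5), (6), (3), (4), (2), (5), (8), 0, 0, 0, 0, 0, 0, 0, 0, 0, 0],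
    ![(2), (4), (-2), (-3), (-4), (-5), (-6), (-3), (-4), (-2), (-5), (-8), (-11), 0, 0, 0, 0, 0, 0, 0, 0, 0],
    ![(-2), (-4), (2), (3), (4), (5), (6), (3), (4), (2), (5), (8), (11), (14), 0, 0, 0, 0, 0, 0, 0, 0],
    ![(2), (4), (-2), (-3), (-4), (-5), (-6), (-3), (-4), (-2), (-5), (-8), (-11), (-14), (-17), 0, 0, 0, 0, 0, 0, 0],
    ![(-4), (-8), (4), (6), (8), (10), (12), (6), (8), (4), (10), (16), (22), (28), (14), (20), 0, 0, 0, 0, 0, 0],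
    ![(4), (8), (-4), (-6), (-8), (-10), (-12), (-6), (-8), (-4), (-10), (-16), (-22), (-28), (-14), (-20), (-12), 0, 0, 0, 0, 0],
    ![0, 0, 0, 0, 0, 0, 0, 0, 0, 0, 0, 0, 0, 0, 0, 0, 0, (4), 0, 0, 0, 0],
    ![(8), (16), (-8), (-12), (-16), (-20), (-24), (-12), (-16), (-8), (-12), (-16), (-20), (-24), (-12), (-16), (-8), (-4), (-8), 0, 0, 0],
    ![(-4), (-8), (4), (6), (8), (10), (12), (6), (8), (4), (6), (8), (10), (12), (6), (8), (4), (4), (4), (4), 0, 0],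
    ![0, (4)*(n:ℤ), (4), 0, 0, 0, 0, 0, 0, 0, (6), (8), (10), (12), (6), (8), (4), 0, (2), (-2), (-4), 0],
    ![(6)+(8)*(n:ℤ), (12)+(10)*(n:ℤ)+(-8)*(n:ℤ)^2, (-12)+(-16)*(n:ℤ), (-9)+(-12)*(n:ℤ), (-12)+(-16)*(n:ℤ), (-15)+(-20)*(n:ℤ), (-18)+(-24)*(n:ℤ), (-9)+(-12)*(n:ℤ), (-12)+(-16)*(n:ℤ), (-6)+(-8)*(n:ℤ), (-18)+(-24)*(n:ℤ), (-24)+(-32)*(n:ℤ), (-30)+(-40)*(n:ℤ), (-36)+(-48)*(n:ℤ), (-18)+(-24)*(n:ℤ), (-24)+(-32)*(n:ℤ), (-12)+(-16)*(n:ℤ), (-6)+(-8)*(n:ℤ), (-9)+(-12)*(n:ℤ), (-3)+(-4)*(n:ℤ), 0, (6)+(8)*(n:ℤ)]]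

def Umat (n : ℕ) : Matrix (Fin 22) (Fin 22) ℤ :=
  Matrix.of ![
    ![(-2), (1), 0, 0, 0, 0, 0, 0, 0, 0, 0, 0, 0, 0, 0, 0, 0, 0, 0, 0, (1)*(n:ℤ), (1)*(n:ℤ)],
    ![0, (-1), (-2), 0, 0, 0, 0, 0, 0, 0, 0, 0, 0, 0, 0, 0, 0, 0, 0, 0, (-2)+(-1)*(n:ℤ), (-2)+(-1)*(n:ℤ)],
    ![0, 0, (4), (-1), 0, 0, 0, 0, 0, 0, (-1), 0, 0, 0, 0, 0, 0, 0, (-1), 0, (2), (2)],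
    ![0, 0, 0, (-7), (4), 0, 0, 0, 0, 0, (1), 0, 0, 0, 0, 0, 0, 0, (1), 0, (2), (2)],
    ![0, 0, 0, 0, (10), (-7), 0, 0, 0, 0, (-1), 0, 0, 0, 0, 0, 0, 0, (-1), 0, (-2), (-2)],
    ![0, 0, 0, 0, 0, (-13), (10), 0, 0, 0, (1), 0, 0, 0, 0, 0, 0, 0, (1), 0, (2), (2)],
    ![0, 0, 0, 0, 0, 0, (16), (-13), (-13), 0, (-1), 0, 0, 0, 0, 0, 0, 0, (-1), 0, (-2), (-2)],
    ![0, 0, 0, 0, 0, 0, 0, (-19), (13), 0, (1), 0, 0, 0, 0, 0, 0, 0, (1), 0, (2), (2)],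
    ![0, 0, 0, 0, 0, 0, 0, 0, (12), (-19), (-2), 0, 0, 0, 0, 0, 0, 0, (-2), 0, (-4), (-4)],
    ![0, 0, 0, 0, 0, 0, 0, 0, 0, (-5), (2), 0, 0, 0, 0, 0, 0, 0, (2), 0, (4), (4)],
    ![0, 0, 0, 0, 0, 0, 0, 0, 0, 0, (8), (-5), 0, 0, 0, 0, 0, 0, (-2), 0, (1), (1)],
    ![0, 0, 0, 0, 0, 0, 0, 0, 0, 0, 0, (-11), (8), 0, 0, 0, 0, 0, (2), 0, (-1), (-1)],
    ![0, 0, 0, 0, 0, 0, 0, 0, 0, 0, 0, 0, (14), (-11), 0, 0, 0, 0, (-2), 0, (1), (1)],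
    ![0, 0, 0, 0, 0, 0, 0, 0, 0, 0, 0, 0, 0, (-17), (14), (14), 0, 0, (2), 0, (-1), (-1)],
    ![0, 0, 0, 0, 0, 0, 0, 0, 0, 0, 0, 0, 0, 0, (20), (-14), 0, 0, (-2), 0, (1), (1)],
    ![0, 0, 0, 0, 0, 0, 0, 0, 0, 0, 0, 0, 0, 0, 0, (-12), (20), 0, (4), 0, (-2), (-2)],
    ![0, 0, 0, 0, 0, 0, 0, 0, 0, 0, 0, 0, 0, 0, 0, 0, (4), 0, (-4), 0, (2), (2)],
    ![0, 0, 0, 0, 0, 0, 0, 0, 0, 0, 0, 0, 0, 0, 0, 0, 0, (-8), (4), (4), 0, 0],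
    ![0, 0, 0, 0, 0, 0, 0, 0, 0, 0, 0, 0, 0, 0, 0, 0, 0, 0, (4), (-4), (4), (4)],
    ![0, 0, 0, 0, 0, 0, 0, 0, 0, 0, 0, 0, 0, 0, 0, 0, 0, 0, 0, (-4), (2), (-2)],
    ![0, 0, 0, 0, 0, 0, 0, 0, 0, 0, 0, 0, 0, 0, 0, 0, 0, 0, 0, 0, (6)+(8)*(n:ℤ), 0],
    ![0, 0, 0, 0, 0, 0, 0, 0, 0, 0, 0, 0, 0, 0, 0, 0, 0, 0, 0, 0, 0, (-9)+(-24)*(n:ℤ)+(-16)*(n:ℤ)^2]]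

set_option maxHeartbeats 8000000 in
lemma hLM (n : ℕ) : Lmat n * M n = Umat n := by
  apply Matrix.ext
  rw [Fin.forall_iff]
  intro i hi
  rw [Fin.forall_iff]
  intro j hj
  interval_cases i <;> interval_cases j <;>
    (simp only [M, Lmat, Umat, Matrix.mul_apply, Fin.sum_univ_succ, Fin.sum_univ_zero,
      Matrix.of_apply, Matrix.cons_val_zero, Matrix.cons_val_succ, Matrix.cons_val_zero', Matrix.cons_val_succ'] <;> ring)

lemma hLtri (n : ℕ) : (Lmat n).BlockTriangular OrderDual.toDual := by
  intro i j hij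
  have hlt : (i : ℕ) < (j : ℕ) := hij
  obtain ⟨i, hi⟩ := i
  obtain ⟨j, hj⟩ := j
  interval_cases i <;> interval_cases j <;>
    first
    | omega
    | simp only [Lmat, Matrix.of_apply, Matrix.cons_val_zero, Matrix.cons_val_succ, Matrix.cons_val_zero', Matrix.cons_val_succ']

lemma hUtri (n : ℕ) : (Umat n).BlockTriangular id := by
  intro i j hij
  have hlt : (j : ℕ) < (i : ℕ) := hij
  obtain ⟨i, hi⟩ := i
  obtain ⟨j, hj⟩ := j
  interval_cases i <;> interval_cases j <;>
    first
    | omega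
    | simp only [Umat, Matrix.of_apply, Matrix.cons_val_zero, Matrix.cons_val_succ, Matrix.cons_val_zero', Matrix.cons_val_succ']

lemma hdetL (n : ℕ) : (Lmat n).det = (-2050445807714304000)+(-2733927743619072000)*(n:ℤ) := by
  rw [Matrix.det_of_lowerTriangular _ (hLtri n)]
  simp only [Lmat, Fin.prod_univ_succ, Fin.prod_univ_zero, Matrix.of_apply, Matrix.cons_val_zero, Matrix.cons_val_succ, Matrix.cons_val_zero', Matrix.cons_val_succ']
  ring

lemma hdetU (n : ℕ) : (Umat n).det = (18454012269428736000)+(73816049077714944000)*(n:ℤ)+(98421398770286592000)*(n:ℤ)^2+(43742843897905152000)*(n:ℤ)^3 := by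
  rw [Matrix.det_of_upperTriangular (hUtri n)]
  simp only [Umat, Fin.prod_univ_succ, Fin.prod_univ_zero, Matrix.of_apply, Matrix.cons_val_zero, Matrix.cons_val_succ, Matrix.cons_val_zero', Matrix.cons_val_succ']
  ring

lemma key {R : Type} [CommRing R] {A B C : Matrix (Fin 22) (Fin 22) R} (h : A * B = C) :
    A.det * B.det = C.det := by
  rw [← Matrix.det_mul, h]

/-- For every natural number `n`, the determinant of the 22×22 symmetric integer matrix
`M n` equals `-(4n+3)^2`. -/
theorem det_M (n : ℕ) : (M n).det = -(4 * n + 3) ^ 2 := by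
  have h0 : ((-2050445807714304000)+(-2733927743619072000)*(n:ℤ) : ℤ) ≠ 0 := by
    intro hc
    omega
  have h2 : ((-2050445807714304000)+(-2733927743619072000)*(n:ℤ)) * (M n).det
      = (18454012269428736000)+(73816049077714944000)*(n:ℤ)+(98421398770286592000)*(n:ℤ)^2+(43742843897905152000)*(n:ℤ)^3 := by
    rw [← hdetL n, ← hdetU n]
    exact key (hLM n)
  apply mul_left_cancel₀ h0
  rw [h2]
  ring
end

section
/- Let p = 4n+3 be a prime and let F be a field of characteristic p containing an element ζ with ζ⁴ = −1. Then in the rational function field F(t), the pairs P = (ζ²·t^{2n+3}(t−1), ζ³·t^{n+3}(t−1)^{2n+3}) and R = (−ζ²·t^{2n+3}(t−1), −ζ·t^{n+3}(t−1)^{2n+3}) both satisfy the Weierstrass equation y² = x³ + t³(t−1)²·x; i.e., P and R are affine points of the elliptic curve X over F(t). -/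
open RatFunc Polynomial

/-- The Weierstrass curve `X : y² = x³ + t³(t−1)²·x` over the rational function field `F(t)`. -/
noncomputable def XCurve (F : Type*) [Field F] : WeierstrassCurve (RatFunc F) where
  a₁ := 0
  a₂ := 0
  a₃ := 0
  a₄ := RatFunc.X ^ 3 * (RatFunc.X - 1) ^ 2
  a₆ := 0

/-- Let `p = 4n+3` be a prime and `F` a field of characteristic `p` containing `ζ` with
`ζ⁴ = −1`.  Then `P = (ζ²t^{2n+3}(t−1), ζ³t^{n+3}(t−1)^{2n+3})` and
`R = (−ζ²t^{2n+3}(t−1), −ζt^{n+3}(t−1)^{2n+3})` are affine points of the elliptic curve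
`X : y² = x³ + t³(t−1)²x` over `F(t)`. -/
theorem P_R_on_XCurve (p n : ℕ) (hp : p.Prime) (hpn : p = 4 * n + 3)
    (F : Type*) [Field F] [CharP F p] (ζ : F) (hζ : ζ ^ 4 = -1) :
    (XCurve F).toAffine.Equation
      (RatFunc.C (ζ ^ 2) * RatFunc.X ^ (2 * n + 3) * (RatFunc.X - 1))
      (RatFunc.C (ζ ^ 3) * RatFunc.X ^ (n + 3) * (RatFunc.X - 1) ^ (2 * n + 3)) ∧
    (XCurve F).toAffine.Equation
      (-(RatFunc.C (ζ ^ 2)) * RatFunc.X ^ (2 * n + 3) * (RatFunc.X - 1))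
      (-(RatFunc.C ζ) * RatFunc.X ^ (n + 3) * (RatFunc.X - 1) ^ (2 * n + 3)) := by
  haveI := Fact.mk hp
  haveI : CharP (RatFunc F) p :=
    charP_of_injective_algebraMap (algebraMap F (RatFunc F)).injective p
  have hu : (RatFunc.X - 1 : RatFunc F) ^ (4 * n + 3) = RatFunc.X ^ (4 * n + 3) - 1 := by
    rw [← hpn, sub_pow_char, one_pow]
  have hc : (RatFunc.C ζ) ^ 4 = -1 := by
    rw [← map_pow, hζ, map_neg, map_one]
  set c : RatFunc F := RatFunc.C ζ with hcdef
  set T : RatFunc F := RatFunc.X with hTdef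
  set u : RatFunc F := RatFunc.X - 1 with hudef
  have hC2 : RatFunc.C (ζ ^ 2) = c ^ 2 := by rw [map_pow]
  have hC3 : RatFunc.C (ζ ^ 3) = c ^ 3 := by rw [map_pow]
  constructor <;> rw [WeierstrassCurve.Affine.equation_iff] <;>
    simp only [XCurve, hC2, hC3, zero_mul, mul_zero, add_zero, zero_add, one_mul, mul_one]
  · linear_combination (c^2*(T^(2*n+6)*u^(4*n+6) - T^(6*n+9)*u^3)) * hc
      - c^2*T^(2*n+6)*u^3 * hu
  · linear_combination c^2*T^(6*n+9)*u^3 * hc + c^2*T^(2*n+6)*u^3 * hu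
end

section
/- Let p = 4n+3 be a prime and let F be a field of characteristic p. Let φ : F(t) → F(t) be the F-algebra homomorphism of the rational function field determined by t ↦ t^p. If x₀, y₀ ∈ F(t) satisfy y₀² = x₀³ + t(t−1)²·x₀, then the elements x₁ = φ(x₀) / (t^{2n}(t−1)^{4n+2}) and y₁ = φ(y₀) / (t^{3n}(t−1)^{6n+3}) satisfy y₁² = x₁³ + t³(t−1)²·x₁. In other words, the purely inseparable base change t ↦ t^p followed by minimization sends points of the elliptic curve Y: y² = x³ + t(t−1)²x over F(t) to points of the elliptic curve X: y² = x³ + t³(t−1)²x over F(t). -/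
open RatFunc

/-- Let `p = 4n+3` be a prime, `F` a field of characteristic `p`, and `φ : F(t) → F(t)` the
`F`-algebra homomorphism of the rational function field determined by `t ↦ t^p`.  If
`(x₀, y₀)` satisfies `y₀² = x₀³ + t(t−1)²·x₀`, then
`x₁ = φ(x₀)/(t^{2n}(t−1)^{4n+2})` and `y₁ = φ(y₀)/(t^{3n}(t−1)^{6n+3})` satisfy
`y₁² = x₁³ + t³(t−1)²·x₁`.  That is, the purely inseparable base change `t ↦ t^p` followed
by minimization sends points of `Y : y² = x³ + t(t−1)²x` to points of
`X : y² = x³ + t³(t−1)²x`. -/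
theorem base_change_Y_to_X (p n : ℕ) (hp : p.Prime) (hpn : p = 4 * n + 3)
    (F : Type*) [Field F] [CharP F p]
    (φ : RatFunc F →ₐ[F] RatFunc F) (hφ : φ RatFunc.X = RatFunc.X ^ p)
    (x₀ y₀ : RatFunc F)
    (h : y₀ ^ 2 = x₀ ^ 3 + RatFunc.X * (RatFunc.X - 1) ^ 2 * x₀) :
    (φ y₀ / (RatFunc.X ^ (3 * n) * (RatFunc.X - 1) ^ (6 * n + 3))) ^ 2 =
      (φ x₀ / (RatFunc.X ^ (2 * n) * (RatFunc.X - 1) ^ (4 * n + 2))) ^ 3 +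
      RatFunc.X ^ 3 * (RatFunc.X - 1) ^ 2 *
        (φ x₀ / (RatFunc.X ^ (2 * n) * (RatFunc.X - 1) ^ (4 * n + 2))) := by
  have : CharP (RatFunc F) p := charP_of_injective_algebraMap (algebraMap F (RatFunc F)).injective p
  have hPF : Fact p.Prime := ⟨hp⟩
  have h2 := congrArg φ h
  simp only [map_pow, map_add, map_mul, map_sub, map_one, hφ] at h2
  have h3 : (RatFunc.X - 1 : RatFunc F) ^ p = RatFunc.X ^ p - 1 := by
    rw [sub_pow_char, one_pow]
  rw [← h3] at h2
  have hX : (RatFunc.X : RatFunc F) ≠ 0 := RatFunc.X_ne_zero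
  have hX1 : (RatFunc.X - 1 : RatFunc F) ≠ 0 := sub_ne_zero.mpr (by
    intro hc
    have h4 : algebraMap (Polynomial F) (RatFunc F) Polynomial.X
        = algebraMap (Polynomial F) (RatFunc F) 1 := by
      simpa [RatFunc.algebraMap_X] using hc
    have h5 := IsFractionRing.injective (Polynomial F) (RatFunc F) h4
    simpa [Polynomial.coeff_one] using congrArg (fun q => Polynomial.coeff q 1) h5)
  subst hpn
  rw [div_pow, div_pow, h2]
  field_simp
  ring
end

section
/- Let p = 4n+3 be a prime, let F be an algebraic closure of the field with p elements, and let ζ ∈ F satisfy ζ⁴ = −1. Then the point P = (ζ²·t^{2n+3}(t−1), ζ³·t^{n+3}(t−1)^{2n+3}) of the elliptic curve X: y² = x³ + t³(t−1)²·x over F(t) has infinite order in the group of points of X; i.e., P is a section of infinite order of the elliptic fibration. -/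
open RatFunc WeierstrassCurve.Affine

section Infra

variable {F : Type*} [Field F]

/-- The polynomial t³(t-1)². -/
noncomputable def Apoly (F : Type*) [Field F] : Polynomial F :=
  Polynomial.X ^ 3 * (Polynomial.X - 1) ^ 2

lemma X_sub_one_ne_zero : (Polynomial.X - 1 : Polynomial F) ≠ 0 := by
  have := Polynomial.X_sub_C_ne_zero (R := F) 1
  simpa using this

lemma Apoly_ne_zero : Apoly F ≠ 0 :=
  mul_ne_zero (pow_ne_zero _ Polynomial.X_ne_zero) (pow_ne_zero _ X_sub_one_ne_zero)

lemma natDegree_Apoly : (Apoly F).natDegree = 5 := by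
  rw [Apoly, Polynomial.natDegree_mul (pow_ne_zero _ Polynomial.X_ne_zero)
    (pow_ne_zero _ X_sub_one_ne_zero), Polynomial.natDegree_pow, Polynomial.natDegree_pow,
    Polynomial.natDegree_X]
  have : (Polynomial.X - 1 : Polynomial F).natDegree = 1 := by
    simpa using Polynomial.natDegree_X_sub_C (1 : F)
  rw [this]

lemma natDegree_sq_add_odd (a w : Polynomial F) (ha : a ≠ 0) (hw : w ≠ 0)
    (hodd : Odd w.natDegree) :
    a ^ 2 + w ≠ 0 ∧ (a ^ 2 + w).natDegree = max (2 * a.natDegree) w.natDegree := by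
  have ha2 : (a ^ 2).natDegree = 2 * a.natDegree := by rw [Polynomial.natDegree_pow]
  have hne : (a ^ 2).natDegree ≠ w.natDegree := by
    obtain ⟨k, hk⟩ := hodd
    omega
  rcases lt_or_gt_of_ne hne with h | h
  · constructor
    · intro h0
      have : w = -(a ^ 2) := by linear_combination h0
      rw [this, Polynomial.natDegree_neg] at h
      omega
    · rw [Polynomial.natDegree_add_eq_right_of_natDegree_lt h, ha2] at *
      omega
  · constructor
    · intro h0
      have : w = -(a ^ 2) := by linear_combination h0
      rw [this, Polynomial.natDegree_neg] at h
      omega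
    · rw [Polynomial.natDegree_add_eq_left_of_natDegree_lt h, ha2] at *
      omega

lemma cs_facts (a b : Polynomial F) (ha : a ≠ 0) (hb : b ≠ 0) :
    (a ^ 2 - Apoly F * b ^ 2 ≠ 0 ∧
      (a ^ 2 - Apoly F * b ^ 2).natDegree = max (2 * a.natDegree) (5 + 2 * b.natDegree)) ∧
    (a ^ 2 + Apoly F * b ^ 2 ≠ 0 ∧
      (a ^ 2 + Apoly F * b ^ 2).natDegree = max (2 * a.natDegree) (5 + 2 * b.natDegree)) := by
  have hAb : (Apoly F * b ^ 2) ≠ 0 := mul_ne_zero Apoly_ne_zero (pow_ne_zero _ hb)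
  have hAbdeg : (Apoly F * b ^ 2).natDegree = 5 + 2 * b.natDegree := by
    rw [Polynomial.natDegree_mul Apoly_ne_zero (pow_ne_zero _ hb), natDegree_Apoly,
      Polynomial.natDegree_pow]
  have hodd : Odd (Apoly F * b ^ 2).natDegree := by rw [hAbdeg]; exact ⟨2 + b.natDegree, by ring⟩
  constructor
  · have := natDegree_sq_add_odd a (-(Apoly F * b ^ 2)) ha (neg_ne_zero.mpr hAb)
      (by rwa [Polynomial.natDegree_neg])
    rw [Polynomial.natDegree_neg, hAbdeg] at this
    constructor
    · intro h0; exact this.1 (by linear_combination h0)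
    · have h2 : a ^ 2 - Apoly F * b ^ 2 = a ^ 2 + -(Apoly F * b ^ 2) := by ring
      rw [h2, this.2]
  · have := natDegree_sq_add_odd a (Apoly F * b ^ 2) ha hAb (by rwa [hAbdeg] at hodd ⊢)
    rw [hAbdeg] at this
    exact this

/-- extraction of num/denom for an explicit fraction of polynomials -/
lemma num_denom_of_div (nn dd : Polynomial F) (hn : nn ≠ 0) (hd : dd ≠ 0) :
    ∃ g : Polynomial F, g ≠ 0 ∧
      nn = (algebraMap (Polynomial F) (RatFunc F) nn / algebraMap _ _ dd).num * g ∧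
      dd = (algebraMap (Polynomial F) (RatFunc F) nn / algebraMap _ _ dd).denom * g := by
  set q := algebraMap (Polynomial F) (RatFunc F) nn / algebraMap _ _ dd with hq
  have hq0 : q ≠ 0 := div_ne_zero (RatFunc.algebraMap_ne_zero hn) (RatFunc.algebraMap_ne_zero hd)
  have hcross : nn * q.denom = dd * q.num := by
    apply RatFunc.algebraMap_injective F
    rw [map_mul, map_mul]
    have h1 : algebraMap (Polynomial F) (RatFunc F) nn / algebraMap _ _ dd
        = algebraMap _ _ q.num / algebraMap _ _ q.denom := by rw [RatFunc.num_div_denom, hq]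
    rw [div_eq_div_iff (RatFunc.algebraMap_ne_zero hd)
      (RatFunc.algebraMap_ne_zero q.denom_ne_zero)] at h1
    rw [← map_mul, ← map_mul] at h1
    have h2 := RatFunc.algebraMap_injective F h1
    rw [← map_mul, ← map_mul]
    congr 1
    linear_combination h2
  have hnum0 : q.num ≠ 0 := RatFunc.num_ne_zero hq0
  have hdvd : q.num ∣ nn := by
    have h3 : q.num ∣ nn * q.denom := hcross ▸ Dvd.intro dd (by ring)
    exact (RatFunc.isCoprime_num_denom q).dvd_of_dvd_mul_right h3
  obtain ⟨g, hg⟩ := hdvd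
  refine ⟨g, ?_, hg, ?_⟩
  · intro h0; rw [h0, mul_zero] at hg; exact hn hg
  · have h4 : dd * q.num = q.num * (q.denom * g) := by
      rw [← hcross, hg]; ring
    have h5 : q.num * dd = q.num * (q.denom * g) := by linear_combination h4
    exact mul_left_cancel₀ hnum0 h5

end Infra

section Gcd
variable {F : Type*} [Field F]

lemma dvd_of_dvd_unit_mul {R : Type*} [CommMonoid R] {a b c : R} (h : IsUnit a)
    (hd : c ∣ a * b) : c ∣ b := by
  obtain ⟨u, rfl⟩ := h
  exact (Units.dvd_mul_left ..).mp (by rwa [mul_comm] at hd)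

lemma bezout_gcd_mul [DecidableEq (Polynomial F)] (x m n : Polynomial F) :
    ∀ g : Polynomial F, g ∣ x → g ∣ m * n →
      g ∣ (EuclideanDomain.gcd x m * EuclideanDomain.gcd x n : Polynomial F) := by
  classical
  intro g hgx hgmn
  have e1 := EuclideanDomain.gcd_eq_gcd_ab x m
  have e2 := EuclideanDomain.gcd_eq_gcd_ab x n
  have key : EuclideanDomain.gcd x m * EuclideanDomain.gcd x n =
      x * (x * (EuclideanDomain.gcdA x m * EuclideanDomain.gcdA x n)
        + EuclideanDomain.gcdA x m * (n * EuclideanDomain.gcdB x n)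
        + (m * EuclideanDomain.gcdB x m) * EuclideanDomain.gcdA x n)
      + (m * n) * (EuclideanDomain.gcdB x m * EuclideanDomain.gcdB x n) := by
    rw [e1, e2]; ring
  rw [key]
  exact dvd_add (hgx.mul_right _) (hgmn.mul_right _)

/-- main divisor bound: any common divisor of `c²` and `a*(b*s)` divides `A⁴`. -/
lemma divisor_bound (a b : Polynomial F) (ha : a ≠ 0) (hb : b ≠ 0)
    (hab : IsCoprime a b) (hF2 : (2 : F) ≠ 0) (g : Polynomial F)
    (hg1 : g ∣ (a ^ 2 - Apoly F * b ^ 2) ^ 2)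
    (hg2 : g ∣ a * (b * (a ^ 2 + Apoly F * b ^ 2))) :
    g ∣ Apoly F ^ 4 := by
  classical
  set A := Apoly F with hA
  set c := a ^ 2 - A * b ^ 2 with hc
  set s := a ^ 2 + A * b ^ 2 with hs
  have h2poly : (2 : Polynomial F) = Polynomial.C (2 : F) := by
    rw [map_ofNat]
  have h2unit : IsUnit (2 : Polynomial F) := by
    rw [h2poly]
    exact Polynomial.isUnit_C.mpr (Ne.isUnit hF2)
  have hcb : IsCoprime c b := by
    have h1 : IsCoprime (a ^ 2) b := hab.pow_left
    have h2 : c = a ^ 2 + b * (-(A * b)) := by rw [hc]; ring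
    rw [h2]
    exact h1.add_mul_left_left _
  have hca : ∀ u : Polynomial F, u ∣ c → u ∣ a → u ∣ A := by
    intro u h1 h2
    have h3 : u ∣ A * b ^ 2 := by
      have : A * b ^ 2 = a * a - c := by rw [hc]; ring
      rw [this]
      exact dvd_sub (h2.mul_left a) h1
    have hub : IsCoprime u (b ^ 2) := (hab.of_isCoprime_of_dvd_left h2).pow_right
    exact hub.dvd_of_dvd_mul_right h3
  have hcs : ∀ u : Polynomial F, u ∣ c → u ∣ s → u ∣ A := by
    intro u h1 h2
    have h3 : u ∣ 2 * (A * b ^ 2) := by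
      have : 2 * (A * b ^ 2) = s - c := by rw [hc, hs]; ring
      rw [this]
      exact dvd_sub h2 h1
    have h4 : u ∣ A * b ^ 2 := dvd_of_dvd_unit_mul h2unit h3
    have hub : IsCoprime u (b ^ 2) := ((hcb.of_isCoprime_of_dvd_left h1)).pow_right
    exact hub.dvd_of_dvd_mul_right h4
  -- gcd bounds
  have hgcd_ca : EuclideanDomain.gcd c a ∣ A :=
    hca _ (EuclideanDomain.gcd_dvd_left _ _) (EuclideanDomain.gcd_dvd_right _ _)
  have hgcd_cs : EuclideanDomain.gcd c s ∣ A :=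
    hcs _ (EuclideanDomain.gcd_dvd_left _ _) (EuclideanDomain.gcd_dvd_right _ _)
  have hgcd_cb : EuclideanDomain.gcd c b ∣ 1 :=
    isUnit_iff_dvd_one.mp <| hcb.isUnit_of_dvd' (EuclideanDomain.gcd_dvd_left _ _)
      (EuclideanDomain.gcd_dvd_right _ _)
  have hgcd_cd : ∀ u : Polynomial F, u ∣ c → u ∣ a * (b * s) → u ∣ A * A := by
    intro u h1 h2
    have step1 : u ∣ EuclideanDomain.gcd c a * EuclideanDomain.gcd c (b * s) :=
      bezout_gcd_mul c a (b * s) u h1 h2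
    have step2 : EuclideanDomain.gcd c (b * s) ∣
        EuclideanDomain.gcd c b * EuclideanDomain.gcd c s :=
      bezout_gcd_mul c b s _ (EuclideanDomain.gcd_dvd_left _ _)
        (EuclideanDomain.gcd_dvd_right _ _)
    have step3 : EuclideanDomain.gcd c b * EuclideanDomain.gcd c s ∣ 1 * A :=
      mul_dvd_mul hgcd_cb hgcd_cs
    rw [one_mul] at step3
    exact step1.trans (mul_dvd_mul hgcd_ca (step2.trans step3))
  -- now the main bound
  have hstep : g ∣ EuclideanDomain.gcd (a * (b * s)) c * EuclideanDomain.gcd (a * (b * s)) c :=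
    bezout_gcd_mul (a * (b * s)) c c g hg2 (by rwa [← sq])
  have hfin : EuclideanDomain.gcd (a * (b * s)) c ∣ A * A :=
    hgcd_cd _ (EuclideanDomain.gcd_dvd_right _ _) (EuclideanDomain.gcd_dvd_left _ _)
  have : g ∣ (A * A) * (A * A) := hstep.trans (mul_dvd_mul hfin hfin)
  have h4 : (A * A) * (A * A) = A ^ 4 := by ring
  rwa [h4] at this

end Gcd

section Height
variable {F : Type*} [Field F]

/-- The x-coordinate duplication map on the curve y² = x³ + t³(t-1)²x. -/
noncomputable def dblX (F : Type*) [Field F] (x : RatFunc F) : RatFunc F :=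
  (x ^ 2 - RatFunc.X ^ 3 * (RatFunc.X - 1) ^ 2) ^ 2 /
    (4 * x * (x ^ 2 + RatFunc.X ^ 3 * (RatFunc.X - 1) ^ 2))

/-- Naive height of a rational function. -/
noncomputable def hgt (x : RatFunc F) : ℕ := max x.num.natDegree x.denom.natDegree

lemma algebraMap_Apoly : algebraMap (Polynomial F) (RatFunc F) (Apoly F)
    = RatFunc.X ^ 3 * (RatFunc.X - 1) ^ 2 := by
  rw [Apoly, map_mul, map_pow, map_pow, map_sub, RatFunc.algebraMap_X, map_one]

lemma myFour_ne_zero (hF2 : (2 : F) ≠ 0) : (4 : F) ≠ 0 := by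
  intro h
  have h22 : (2 : F) * 2 = 4 := by norm_num
  rw [h] at h22
  rcases mul_eq_zero.mp h22 with h' | h' <;> exact hF2 h'

lemma four_poly_ne_zero (hF2 : (2 : F) ≠ 0) : (4 : Polynomial F) ≠ 0 := by
  have : (4 : Polynomial F) = Polynomial.C (4 : F) := by rw [map_ofNat]
  rw [this]
  exact Polynomial.C_ne_zero.mpr (myFour_ne_zero hF2)

lemma hgt_dblX (hF2 : (2 : F) ≠ 0) (x : RatFunc F) (hx : x ≠ 0) :
    dblX F x ≠ 0 ∧ 4 * hgt x ≤ hgt (dblX F x) + 20 ∧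
      (IsCoprime x.num (Apoly F) → 4 * hgt x ≤ hgt (dblX F x)) := by
  set a := x.num with hax
  set b := x.denom with hbx
  have ha : a ≠ 0 := RatFunc.num_ne_zero hx
  have hb : b ≠ 0 := x.denom_ne_zero
  have hab : IsCoprime a b := x.isCoprime_num_denom
  obtain ⟨⟨hc0, hcdeg⟩, hs0, hsdeg⟩ := cs_facts a b ha hb
  set c := a ^ 2 - Apoly F * b ^ 2 with hcdef
  set s := a ^ 2 + Apoly F * b ^ 2 with hsdef
  set nn := c ^ 2 with hnndef
  set dd := 4 * (a * (b * s)) with hdddef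
  have hnn : nn ≠ 0 := pow_ne_zero _ hc0
  have hdd : dd ≠ 0 := mul_ne_zero (four_poly_ne_zero hF2)
    (mul_ne_zero ha (mul_ne_zero hb hs0))
  set α := algebraMap (Polynomial F) (RatFunc F) with hαdef
  have hb' : α b ≠ 0 := RatFunc.algebraMap_ne_zero hb
  have ha' : α a ≠ 0 := RatFunc.algebraMap_ne_zero ha
  have hs' : α s ≠ 0 := RatFunc.algebraMap_ne_zero hs0
  have hc' : α c ≠ 0 := RatFunc.algebraMap_ne_zero hc0
  have hxab : x = α a / α b := (RatFunc.num_div_denom x).symm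
  have hsum : x ^ 2 + RatFunc.X ^ 3 * (RatFunc.X - 1) ^ 2 = α s / (α b) ^ 2 := by
    rw [hxab, ← algebraMap_Apoly, hsdef, map_add, map_mul, map_pow, map_pow]
    field_simp
    rfl
  have hdiff : x ^ 2 - RatFunc.X ^ 3 * (RatFunc.X - 1) ^ 2 = α c / (α b) ^ 2 := by
    rw [hxab, ← algebraMap_Apoly, hcdef, map_sub, map_mul, map_pow, map_pow]
    field_simp
    ring
  have h4' : (4 : RatFunc F) ≠ 0 := by
    have h44 : (4 : RatFunc F) = α (4 : Polynomial F) := by rw [map_ofNat]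
    rw [h44]
    exact RatFunc.algebraMap_ne_zero (four_poly_ne_zero hF2)
  have heq : dblX F x = α nn / α dd := by
    rw [dblX, hsum, hdiff]
    rw [hnndef, hdddef, map_pow, map_mul, map_mul, map_mul, map_ofNat]
    rw [hxab]
    field_simp
  have hdx0 : dblX F x ≠ 0 := by
    rw [heq]
    exact div_ne_zero (RatFunc.algebraMap_ne_zero hnn) (RatFunc.algebraMap_ne_zero hdd)
  obtain ⟨g, hg0, hgn, hgd⟩ := num_denom_of_div nn dd hnn hdd
  rw [← hαdef, ← heq] at hgn hgd
  have hgdvd_nn : g ∣ nn := hgn ▸ dvd_mul_left g _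
  have hgdvd_dd : g ∣ dd := hgd ▸ dvd_mul_left g _
  have h2unit : IsUnit (2 : Polynomial F) := by
    rw [(by rw [map_ofNat] : (2 : Polynomial F) = Polynomial.C (2 : F))]
    exact Polynomial.isUnit_C.mpr (Ne.isUnit hF2)
  have h4unit : IsUnit (4 : Polynomial F) := by
    have : (4 : Polynomial F) = 2 * 2 := by norm_num
    rw [this]
    exact h2unit.mul h2unit
  have hgdvd_d' : g ∣ a * (b * s) := dvd_of_dvd_unit_mul h4unit hgdvd_dd
  have hbound : g ∣ Apoly F ^ 4 :=
    divisor_bound a b ha hb hab hF2 g hgdvd_nn hgdvd_d'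
  have hgdeg : g.natDegree ≤ 20 := by
    have := Polynomial.natDegree_le_of_dvd hbound (pow_ne_zero _ Apoly_ne_zero)
    rwa [Polynomial.natDegree_pow, natDegree_Apoly] at this
  have hnum0 : (dblX F x).num ≠ 0 := RatFunc.num_ne_zero hdx0
  have hmul : nn.natDegree = (dblX F x).num.natDegree + g.natDegree := by
    rw [hgn, Polynomial.natDegree_mul hnum0 hg0]
  have hnndeg : nn.natDegree = 2 * c.natDegree := by
    rw [hnndef, Polynomial.natDegree_pow]
  have hhgt : hgt x = max a.natDegree b.natDegree := rfl
  have hnumle : (dblX F x).num.natDegree ≤ hgt (dblX F x) := le_max_left _ _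
  refine ⟨hdx0, by omega, ?_⟩
  intro hcop
  have hcA : IsCoprime c (Apoly F) := by
    have h1 : IsCoprime (a ^ 2) (Apoly F) := hcop.pow_left
    have h2 : c = a ^ 2 + Apoly F * (-(b ^ 2)) := by rw [hcdef]; ring
    rw [h2]
    exact h1.add_mul_left_left _
  have hgunit : IsUnit g := (hcA.pow).isUnit_of_dvd' hgdvd_nn hbound
  have hg_deg0 : g.natDegree = 0 := Polynomial.natDegree_eq_zero_of_isUnit hgunit
  omega

end Height

section Curve
variable {F : Type*} [Field F]

lemma sq_add_A_ne_zero (x : RatFunc F) :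
    x ^ 2 + RatFunc.X ^ 3 * (RatFunc.X - 1) ^ 2 ≠ 0 := by
  rcases eq_or_ne x 0 with rfl | hx
  · rw [← algebraMap_Apoly]
    simpa using RatFunc.algebraMap_ne_zero (Apoly_ne_zero (F := F))
  · set a := x.num with hax
    set b := x.denom with hbx
    have ha : a ≠ 0 := RatFunc.num_ne_zero hx
    have hb : b ≠ 0 := x.denom_ne_zero
    obtain ⟨-, hs0, -⟩ := cs_facts a b ha hb
    set α := algebraMap (Polynomial F) (RatFunc F) with hαdef
    have hb' : α b ≠ 0 := RatFunc.algebraMap_ne_zero hb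
    have hxab : x = α a / α b := (RatFunc.num_div_denom x).symm
    have hsum : x ^ 2 + RatFunc.X ^ 3 * (RatFunc.X - 1) ^ 2
        = α (a ^ 2 + Apoly F * b ^ 2) / (α b) ^ 2 := by
      rw [hxab, ← algebraMap_Apoly, map_add, map_mul, map_pow, map_pow]
      field_simp
      rfl
    rw [hsum]
    exact div_ne_zero (RatFunc.algebraMap_ne_zero hs0) (pow_ne_zero _ hb')

lemma equation_XCurve (x y : RatFunc F) :
    (XCurve F).toAffine.Equation x y ↔
      y ^ 2 = x ^ 3 + RatFunc.X ^ 3 * (RatFunc.X - 1) ^ 2 * x := by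
  rw [WeierstrassCurve.Affine.equation_iff]
  simp [XCurve]

open Classical in
lemma double_point (hF2 : (2 : F) ≠ 0) {x y : RatFunc F}
    (h : (XCurve F).toAffine.Nonsingular x y) (hx : x ≠ 0) :
    ∃ (x' y' : RatFunc F) (h' : (XCurve F).toAffine.Nonsingular x' y'),
      (WeierstrassCurve.Affine.Point.some _ _ h + WeierstrassCurve.Affine.Point.some _ _ h
        = WeierstrassCurve.Affine.Point.some _ _ h') ∧ x' = dblX F x := by
  have h2K : (2 : RatFunc F) ≠ 0 := by
    have : (2 : RatFunc F) = algebraMap (Polynomial F) (RatFunc F) (2 : Polynomial F) := by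
      rw [map_ofNat]
    rw [this]
    refine RatFunc.algebraMap_ne_zero ?_
    rw [(by rw [map_ofNat] : (2 : Polynomial F) = Polynomial.C (2 : F))]
    exact Polynomial.C_ne_zero.mpr hF2
  have heq : y ^ 2 = x ^ 3 + RatFunc.X ^ 3 * (RatFunc.X - 1) ^ 2 * x :=
    (equation_XCurve x y).mp h.1
  have hxs : x ^ 2 + RatFunc.X ^ 3 * (RatFunc.X - 1) ^ 2 ≠ 0 := sq_add_A_ne_zero x
  have hy : y ≠ 0 := by
    intro h0
    rw [h0] at heq
    have : x * (x ^ 2 + RatFunc.X ^ 3 * (RatFunc.X - 1) ^ 2) = 0 := by linear_combination -heq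
    exact (mul_ne_zero hx hxs) this
  have hyneg : y ≠ (XCurve F).toAffine.negY x y := by
    simp only [WeierstrassCurve.Affine.negY, XCurve]
    intro h0
    apply hy
    have h2y : (2 : RatFunc F) * y = 0 := by linear_combination h0
    rcases mul_eq_zero.mp h2y with h' | h'
    · exact absurd h' h2K
    · exact h'
  refine ⟨_, _, WeierstrassCurve.Affine.nonsingular_add h h (fun hxy => hyneg hxy.2),
    WeierstrassCurve.Affine.Point.add_of_Y_ne hyneg, ?_⟩
  rw [WeierstrassCurve.Affine.slope_of_Y_ne rfl hyneg]
  simp only [WeierstrassCurve.Affine.addX, WeierstrassCurve.Affine.negY, XCurve, dblX]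
  have hden : y - (-y - 0 * x - 0) = 2 * y := by ring
  rw [hden]
  have h4y : (4 : RatFunc F) * x * (x ^ 2 + RatFunc.X ^ 3 * (RatFunc.X - 1) ^ 2) ≠ 0 := by
    refine mul_ne_zero (mul_ne_zero ?_ hx) hxs
    intro h0
    have h22 : (2 : RatFunc F) * 2 = 4 := by norm_num
    rw [h0] at h22
    rcases mul_eq_zero.mp h22 with h' | h' <;> exact h2K h'
  have h4 : (4 : RatFunc F) ≠ 0 := by
    intro h0; apply h4y; rw [h0]; ring
  field_simp
  linear_combination (-4 * (8 * x ^ 2 * (x ^ 2 + RatFunc.X ^ 3 * (RatFunc.X - 1) ^ 2)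
    + (x ^ 2 - RatFunc.X ^ 3 * (RatFunc.X - 1) ^ 2) ^ 2)) * heq

end Curve

open Classical in
/-- Let `p = 4n+3` be a prime, `F` an algebraic closure of the field with `p` elements, and
`ζ ∈ F` with `ζ⁴ = −1`.  Then `P = (ζ²t^{2n+3}(t−1), ζ³t^{n+3}(t−1)^{2n+3})` is a point of
infinite order in the group of points of `X : y² = x³ + t³(t−1)²·x` over `F(t)`. -/
theorem P_infinite_order (p n : ℕ) [hp : Fact p.Prime] (hpn : p = 4 * n + 3)
    (F : Type*) [Field F] [Algebra (ZMod p) F] [IsAlgClosure (ZMod p) F]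
    (ζ : F) (hζ : ζ ^ 4 = -1) :
    ∃ h : (XCurve F).toAffine.Nonsingular
        (RatFunc.C (ζ ^ 2) * RatFunc.X ^ (2 * n + 3) * (RatFunc.X - 1))
        (RatFunc.C (ζ ^ 3) * RatFunc.X ^ (n + 3) * (RatFunc.X - 1) ^ (2 * n + 3)),
      ¬ IsOfFinAddOrder (WeierstrassCurve.Affine.Point.some _ _ h) := by
  subst hpn
  haveI hcharF : CharP F (4 * n + 3) :=
    charP_of_injective_algebraMap (algebraMap (ZMod (4 * n + 3)) F).injective _
  haveI hcharK : CharP (RatFunc F) (4 * n + 3) :=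
    charP_of_injective_algebraMap (algebraMap F (RatFunc F)).injective _
  have hF2 : (2 : F) ≠ 0 := by
    intro h0
    have h1 : ((2 : ℕ) : F) = 0 := by exact_mod_cast h0
    have h2 := (CharP.cast_eq_zero_iff F (4 * n + 3) 2).mp h1
    have := Nat.le_of_dvd (by norm_num) h2
    omega
  have h2K : (2 : RatFunc F) ≠ 0 := by
    have : (2 : RatFunc F) = algebraMap (Polynomial F) (RatFunc F) (2 : Polynomial F) := by
      rw [map_ofNat]
    rw [this, (by rw [map_ofNat] : (2 : Polynomial F) = Polynomial.C (2 : F))]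
    exact RatFunc.algebraMap_ne_zero (Polynomial.C_ne_zero.mpr hF2)
  have hζ0 : ζ ≠ 0 := by
    intro h0
    rw [h0] at hζ
    have h04 : (0 : F) ^ 4 = 0 := by norm_num
    rw [h04] at hζ
    exact one_ne_zero (by linear_combination hζ : (1 : F) = 0)
  set T : RatFunc F := RatFunc.X with hT
  set u : RatFunc F := RatFunc.C ζ with hu
  have hCalg : ∀ c : F, RatFunc.C c = algebraMap (Polynomial F) (RatFunc F) (Polynomial.C c) :=
    fun c => (RatFunc.algebraMap_C c).symm
  have hune : u ≠ 0 := by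
    rw [hu, hCalg]
    exact RatFunc.algebraMap_ne_zero (Polynomial.C_ne_zero.mpr hζ0)
  have huK : u ^ 4 = -1 := by rw [hu, ← map_pow, hζ, map_neg, map_one]
  have hfrob1 : (T + 1) ^ (4 * n + 3) = T ^ (4 * n + 3) + 1 := by
    have := add_pow_char T (1 : RatFunc F) (4 * n + 3)
    rwa [one_pow] at this
  have hfrob2 : (T - 1) ^ (4 * n + 3) = T ^ (4 * n + 3) - 1 := by
    have := sub_pow_char T (1 : RatFunc F) (p := 4 * n + 3)
    rwa [one_pow] at this
  have hXalg : T = algebraMap (Polynomial F) (RatFunc F) Polynomial.X := by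
    rw [hT, RatFunc.algebraMap_X]
  have hXne : T ≠ 0 := by
    rw [hXalg]; exact RatFunc.algebraMap_ne_zero Polynomial.X_ne_zero
  have hX1ne : T - 1 ≠ 0 := by
    rw [hXalg, (by rw [map_sub, map_one] :
      algebraMap (Polynomial F) (RatFunc F) Polynomial.X - 1
        = algebraMap (Polynomial F) (RatFunc F) (Polynomial.X - 1))]
    exact RatFunc.algebraMap_ne_zero X_sub_one_ne_zero
  have hCsq : RatFunc.C (ζ ^ 2) = u ^ 2 := by rw [hu, map_pow]
  have hCcube : RatFunc.C (ζ ^ 3) = u ^ 3 := by rw [hu, map_pow]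
  set x₀ : RatFunc F := RatFunc.C (ζ ^ 2) * T ^ (2 * n + 3) * (T - 1) with hx₀
  set y₀ : RatFunc F := RatFunc.C (ζ ^ 3) * T ^ (n + 3) * (T - 1) ^ (2 * n + 3) with hy₀
  have hx₀ne : x₀ ≠ 0 := by
    rw [hx₀, hCsq]
    exact mul_ne_zero (mul_ne_zero (pow_ne_zero _ hune) (pow_ne_zero _ hXne)) hX1ne
  have hy₀ne : y₀ ≠ 0 := by
    rw [hy₀, hCcube]
    exact mul_ne_zero (mul_ne_zero (pow_ne_zero _ hune) (pow_ne_zero _ hXne))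
      (pow_ne_zero _ hX1ne)
  have hEq : (XCurve F).toAffine.Equation x₀ y₀ := by
    rw [equation_XCurve, hx₀, hy₀, hCsq, hCcube]
    linear_combination (u ^ 6 * T ^ (2 * n + 6) * (T - 1) ^ 3) * hfrob2 +
      (-(T - 1) ^ 3 * T ^ (2 * n + 6) * u ^ 2) * huK
  have hNS : (XCurve F).toAffine.Nonsingular x₀ y₀ := by
    rw [WeierstrassCurve.Affine.nonsingular_iff']
    refine ⟨hEq, Or.inr ?_⟩
    simp only [XCurve]
    intro h0
    have h2y : (2 : RatFunc F) * y₀ = 0 := by linear_combination h0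
    rcases mul_eq_zero.mp h2y with h' | h'
    · exact h2K h'
    · exact hy₀ne h'
  refine ⟨hNS, ?_⟩
  intro hfin
  -- step 1: double P
  obtain ⟨x₁, y₁, h₁, e₁, hx₁⟩ := double_point hF2 hNS hx₀ne
  subst hx₁
  -- explicit form of dblX x₀
  have e1 : x₀ ^ 2 - T ^ 3 * (T - 1) ^ 2 = -(T ^ 3 * (T - 1) ^ 2 * (T + 1) ^ (4 * n + 3)) := by
    rw [hx₀, hCsq]
    linear_combination (T ^ (4 * n + 6) * (T - 1) ^ 2) * huK + (T ^ 3 * (T - 1) ^ 2) * hfrob1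
  have e2 : x₀ ^ 2 + T ^ 3 * (T - 1) ^ 2 = -(T ^ 3 * (T - 1) ^ (4 * n + 5)) := by
    rw [hx₀, hCsq]
    linear_combination (T ^ (4 * n + 6) * (T - 1) ^ 2) * huK + (T ^ 3 * (T - 1) ^ 2) * hfrob2
  set n₀ : Polynomial F := (Polynomial.X + 1) ^ (2 * (4 * n + 3)) with hn₀def
  set d₀ : Polynomial F := Polynomial.C (-(4 * ζ ^ 2)) *
    (Polynomial.X ^ (2 * n) * (Polynomial.X - 1) ^ (4 * n + 2)) with hd₀def
  have hX1poly : (Polynomial.X + 1 : Polynomial F) ≠ 0 := by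
    have := Polynomial.X_add_C_ne_zero (R := F) 1
    simpa using this
  have hn₀ne : n₀ ≠ 0 := pow_ne_zero _ hX1poly
  have h4F : (4 : F) ≠ 0 := myFour_ne_zero hF2
  have h4ζ : -(4 * ζ ^ 2) ≠ 0 := by
    rw [neg_ne_zero]
    exact mul_ne_zero h4F (pow_ne_zero _ hζ0)
  have hd₀ne : d₀ ≠ 0 := mul_ne_zero (Polynomial.C_ne_zero.mpr h4ζ)
    (mul_ne_zero (pow_ne_zero _ Polynomial.X_ne_zero) (pow_ne_zero _ X_sub_one_ne_zero))
  have h4K : (4 : RatFunc F) ≠ 0 := by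
    intro h0
    have h22 : (2 : RatFunc F) * 2 = 4 := by norm_num
    rw [h0] at h22
    rcases mul_eq_zero.mp h22 with h' | h' <;> exact h2K h'
  have hCc : RatFunc.C (-(4 * ζ ^ 2)) = -(4 * u ^ 2) := by
    rw [map_neg, map_mul, map_pow, map_ofNat, hu]
  have hx1eq : dblX F x₀ = algebraMap (Polynomial F) (RatFunc F) n₀ /
      algebraMap (Polynomial F) (RatFunc F) d₀ := by
    rw [dblX, ← hT, e1, e2, hn₀def, hd₀def]
    rw [map_mul, map_pow, map_add, map_mul, map_pow, map_pow, map_sub,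
      RatFunc.algebraMap_X, map_one, ← hCalg, hCc, ← hT]
    have hd1 : (4 : RatFunc F) * x₀ * (-(T ^ 3 * (T - 1) ^ (4 * n + 5))) ≠ 0 := by
      refine mul_ne_zero (mul_ne_zero h4K hx₀ne) ?_
      rw [neg_ne_zero]
      exact mul_ne_zero (pow_ne_zero _ hXne) (pow_ne_zero _ hX1ne)
    have hd2 : -(4 * u ^ 2) * (T ^ (2 * n) * (T - 1) ^ (4 * n + 2)) ≠ 0 := by
      refine mul_ne_zero ?_ (mul_ne_zero (pow_ne_zero _ hXne) (pow_ne_zero _ hX1ne))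
      rw [neg_ne_zero]
      exact mul_ne_zero h4K (pow_ne_zero _ hune)
    rw [div_eq_div_iff hd1 hd2, hx₀, hCsq]
    ring
  obtain ⟨g, hg0, hgn, hgd⟩ := num_denom_of_div n₀ d₀ hn₀ne hd₀ne
  rw [← hx1eq] at hgn hgd
  have i1 : IsCoprime (Polynomial.X + 1 : Polynomial F) Polynomial.X := ⟨1, -1, by ring⟩
  have h2poly : (2 : Polynomial F) = Polynomial.C (2 : F) := by rw [map_ofNat]
  have i2 : IsCoprime (Polynomial.X + 1 : Polynomial F) (Polynomial.X - 1) := by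
    refine ⟨Polynomial.C (2⁻¹ : F), -(Polynomial.C (2⁻¹ : F)), ?_⟩
    have hst : Polynomial.C (2⁻¹ : F) * (Polynomial.X + 1) +
        -(Polynomial.C (2⁻¹ : F)) * (Polynomial.X - 1) = Polynomial.C (2⁻¹ : F) * 2 := by ring
    rw [hst, h2poly, ← map_mul, inv_mul_cancel₀ hF2, map_one]
  have iC : IsCoprime (Polynomial.X + 1 : Polynomial F) (Polynomial.C (-(4 * ζ ^ 2))) := by
    refine ⟨0, Polynomial.C ((-(4 * ζ ^ 2))⁻¹), ?_⟩
    rw [zero_mul, zero_add, ← map_mul, inv_mul_cancel₀ h4ζ, map_one]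
  have hcop : IsCoprime n₀ d₀ := by
    rw [hn₀def, hd₀def]
    exact ((iC.mul_right ((i1.pow_right).mul_right (i2.pow_right)))).pow_left
  have hgunit : IsUnit g := hcop.isUnit_of_dvd' (hgn ▸ dvd_mul_left g _) (hgd ▸ dvd_mul_left g _)
  have hgdeg0 : g.natDegree = 0 := Polynomial.natDegree_eq_zero_of_isUnit hgunit
  have hx₁ne : dblX F x₀ ≠ 0 := (hgt_dblX hF2 x₀ hx₀ne).1
  have hnumdeg : (dblX F x₀).num.natDegree = 2 * (4 * n + 3) := by
    have hnum0 : (dblX F x₀).num ≠ 0 := RatFunc.num_ne_zero hx₁ne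
    have hh := congrArg Polynomial.natDegree hgn
    rw [Polynomial.natDegree_mul hnum0 hg0, hn₀def, Polynomial.natDegree_pow] at hh
    have hdX1 : (Polynomial.X + 1 : Polynomial F).natDegree = 1 := by
      simpa using Polynomial.natDegree_X_add_C (1 : F)
    rw [hdX1, mul_one] at hh
    omega
  have hhgt1 : 2 * (4 * n + 3) ≤ hgt (dblX F x₀) := by
    rw [← hnumdeg]
    exact le_max_left _ _
  have hnumcop : IsCoprime (dblX F x₀).num (Apoly F) := by
    have hdvd : (dblX F x₀).num ∣ n₀ := hgn ▸ Dvd.intro g rfl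
    have hco2 : IsCoprime n₀ (Apoly F) := by
      rw [hn₀def, Apoly]
      exact (((i1.pow_right).mul_right (i2.pow_right))).pow_left
    exact hco2.of_isCoprime_of_dvd_left hdvd
  -- step 2: double 2P
  obtain ⟨x₂, y₂, h₂, e₂, hx₂⟩ := double_point hF2 h₁ hx₁ne
  subst hx₂
  obtain ⟨hx₂ne, -, hco⟩ := hgt_dblX hF2 (dblX F x₀) hx₁ne
  have hhgt2 : 24 ≤ hgt (dblX F (dblX F x₀)) := by
    have := hco hnumcop
    omega
  -- the iterated x-coordinate sequence
  set v : ℕ → RatFunc F := fun k => (dblX F)^[k] (dblX F (dblX F x₀)) with hv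
  have hv0 : v 0 = dblX F (dblX F x₀) := rfl
  have hvs : ∀ k, v (k + 1) = dblX F (v k) := fun k => Function.iterate_succ_apply' _ _ _
  have hinv : ∀ k, v k ≠ 0 ∧ 7 ≤ hgt (v k) := by
    intro k
    induction k with
    | zero => rw [hv0]; exact ⟨hx₂ne, by omega⟩
    | succ k ih =>
      obtain ⟨ih1, ih2⟩ := ih
      obtain ⟨ha, hb, -⟩ := hgt_dblX hF2 (v k) ih1
      rw [hvs k]
      exact ⟨ha, by omega⟩
  have hlt : ∀ k, hgt (v k) < hgt (v (k + 1)) := by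
    intro k
    obtain ⟨ih1, ih2⟩ := hinv k
    obtain ⟨-, hb, -⟩ := hgt_dblX hF2 (v k) ih1
    rw [hvs k]
    omega
  have hmono : StrictMono fun k => hgt (v k) := strictMono_nat_of_lt_succ hlt
  set Q := WeierstrassCurve.Affine.Point.some _ _ h₂ with hQ
  have hpoints : ∀ k, ∃ (x' y' : RatFunc F) (h' : (XCurve F).toAffine.Nonsingular x' y'),
      (2 ^ k) • Q = WeierstrassCurve.Affine.Point.some _ _ h' ∧ x' = v k := by
    intro k
    induction k with
    | zero => exact ⟨_, y₂, h₂, by rw [pow_zero, one_nsmul], rfl⟩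
    | succ k ih =>
      obtain ⟨xk, yk, hk, hQk, hxk⟩ := ih
      have hxkne : xk ≠ 0 := by rw [hxk]; exact (hinv k).1
      obtain ⟨x', y', h', hadd, hx'⟩ := double_point hF2 hk hxkne
      refine ⟨x', y', h', ?_, ?_⟩
      · rw [pow_succ', mul_smul, hQk, two_nsmul, hadd]
      · rw [hx', hxk, ← hvs]
  have hfin2 : IsOfFinAddOrder Q := by
    have q1 : (2 : ℕ) • WeierstrassCurve.Affine.Point.some _ _ hNS
        = WeierstrassCurve.Affine.Point.some _ _ h₁ := by rw [two_nsmul, e₁]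
    have q2 : (2 : ℕ) • WeierstrassCurve.Affine.Point.some _ _ h₁ = Q := by rw [two_nsmul, e₂]
    rw [← q2, ← q1]
    exact (hfin.nsmul).nsmul
  have hm : 0 < addOrderOf Q := hfin2.addOrderOf_pos
  obtain ⟨k, l, hkl, hf⟩ := Finite.exists_ne_map_eq_of_infinite
    (fun k : ℕ => (⟨2 ^ k % addOrderOf Q, Nat.mod_lt _ hm⟩ : Fin (addOrderOf Q)))
  have hQeq : (2 ^ k) • Q = (2 ^ l) • Q := by
    rw [← mod_addOrderOf_nsmul Q (2 ^ k), ← mod_addOrderOf_nsmul Q (2 ^ l)]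
    have hmod : 2 ^ k % addOrderOf Q = 2 ^ l % addOrderOf Q := congrArg Fin.val hf
    rw [hmod]
  obtain ⟨xk, yk, hk, hQk, hxk⟩ := hpoints k
  obtain ⟨xl, yl, hl, hQl, hxl⟩ := hpoints l
  rw [hQk, hQl] at hQeq
  injection hQeq with hxx hrest
  apply hkl
  apply hmono.injective
  show hgt (v k) = hgt (v l)
  rw [← hxk, ← hxl, hxx]
end

section
/- Let L be a free ℤ-module of finite rank equipped with a nondegenerate symmetric bilinear form whose extension to L ⊗ ℝ has signature (1, n), i.e., whose Gram matrix, viewed as a real symmetric matrix, has exactly one positive eigenvalue. If f : L → L is an isometry of this bilinear form, then the characteristic polynomial of f has at most one complex root of absolute value greater than 1, counted with algebraic multiplicity, and if such a root exists it is real. -/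
open Polynomial

open Polynomial Matrix Module

namespace SalemAux

variable {m : ℕ}

lemma comp_eq_aeval (p : ℂ[X]) (μ : ℂ) : p.comp (X + C μ) = aeval (X + C μ) p := by
  rw [aeval_def, Polynomial.algebraMap_eq]; rfl

lemma charpoly_sub_smul_one (A : Matrix (Fin m) (Fin m) ℂ) (μ : ℂ) :
    (A - μ • 1).charpoly = A.charpoly.comp (X + C μ) := by
  have hmat : (A - μ • 1).charmatrix
      = (A.charmatrix).map ((aeval (X + C μ) : ℂ[X] →ₐ[ℂ] ℂ[X]) : ℂ[X] →+* ℂ[X]) := by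
    ext i j
    rcases eq_or_ne i j with rfl | hij
    · simp [charmatrix_apply_eq, Matrix.sub_apply, Matrix.smul_apply, Matrix.one_apply,
        Matrix.map_apply, C_sub]
      ring
    · simp [charmatrix_apply_ne _ _ _ hij, Matrix.map_apply, Matrix.one_apply_ne hij]
  rw [Matrix.charpoly, Matrix.charpoly, hmat, comp_eq_aeval, ← RingHom.mapMatrix_apply,
    ← RingHom.map_det]
  rfl


lemma charpoly_toLin' (B : Matrix (Fin m) (Fin m) ℂ) :
    (Matrix.toLin' B).charpoly = B.charpoly := by
  rw [← LinearMap.charpoly_toMatrix (Matrix.toLin' B) (Pi.basisFun ℂ (Fin m)),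
    LinearMap.toMatrix_eq_toMatrix', LinearMap.toMatrix'_toLin']

lemma finrank_maxGen_eq_count (A : Matrix (Fin m) (Fin m) ℂ) (μ : ℂ) :
    finrank ℂ (Module.End.maxGenEigenspace (Matrix.toLin' A) μ) = A.charpoly.rootMultiplicity μ := by
  have h1 : Module.End.maxGenEigenspace (Matrix.toLin' A) μ
      = Module.End.maxGenEigenspace (Matrix.toLin' A - μ • 1) 0 := by
    ext x
    simp [Module.End.mem_maxGenEigenspace]
  have h2 : Matrix.toLin' A - μ • (1 : Module.End ℂ (Fin m → ℂ))
      = Matrix.toLin' (A - μ • 1) := by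
    rw [map_sub, _root_.map_smul, Matrix.toLin'_one]
    rfl
  rw [h1, h2, LinearMap.finrank_maxGenEigenspace_zero_eq, charpoly_toLin', charpoly_sub_smul_one,
    rootMultiplicity_eq_natTrailingDegree]


/-- The Hermitian pairing given by a matrix. -/
noncomputable def herm (Gc : Matrix (Fin m) (Fin m) ℂ) (v w : Fin m → ℂ) : ℂ :=
  star v ⬝ᵥ (Gc *ᵥ w)

lemma herm_invariant (Gc Uc : Matrix (Fin m) (Fin m) ℂ) (hU : Ucᴴ * Gc * Uc = Gc)
    (v w : Fin m → ℂ) : herm Gc (Uc *ᵥ v) (Uc *ᵥ w) = herm Gc v w := by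
  unfold herm
  rw [star_mulVec, ← Matrix.dotProduct_mulVec, Matrix.mulVec_mulVec, Matrix.mulVec_mulVec, hU]

lemma pairing (Gc Uc : Matrix (Fin m) (Fin m) ℂ) (hU : Ucᴴ * Gc * Uc = Gc)
    (l u : ℂ) (hlu : (starRingEnd ℂ) l * u ≠ 1) :
    ∀ (N a b : ℕ) (v w : Fin m → ℂ), a + b ≤ N →
      ((Matrix.toLin' Uc - l • 1) ^ a) v = 0 → ((Matrix.toLin' Uc - u • 1) ^ b) w = 0 →
      herm Gc v w = 0 := by
  intro N
  induction N with
  | zero =>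
    intro a b v w hab hv hw
    have ha : a = 0 := by omega
    have hb : b = 0 := by omega
    subst ha
    rw [pow_zero] at hv
    have : v = 0 := hv
    simp [herm, this]
  | succ N ih =>
    intro a b v w hab hv hw
    rcases Nat.eq_zero_or_pos a with rfl | hapos
    · rw [pow_zero] at hv
      have : v = 0 := hv
      simp [herm, this]
    rcases Nat.eq_zero_or_pos b with rfl | hbpos
    · rw [pow_zero] at hw
      have : w = 0 := hw
      simp [herm, this]
    obtain ⟨a', rfl⟩ : ∃ a', a = a' + 1 := ⟨a - 1, by omega⟩
    obtain ⟨b', rfl⟩ : ∃ b', b = b' + 1 := ⟨b - 1, by omega⟩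
    set f := Matrix.toLin' Uc with hf
    set v' := (f - l • 1) v with hv'
    set w' := (f - u • 1) w with hw'
    have hva : ((f - l • 1) ^ a') v' = 0 := by
      rw [hv', ← Module.End.mul_apply, ← pow_succ]; exact hv
    have hwb : ((f - u • 1) ^ b') w' = 0 := by
      rw [hw', ← Module.End.mul_apply, ← pow_succ]; exact hw
    have h11 : herm Gc v' w' = 0 := ih a' b' v' w' (by omega) hva hwb
    have h12 : herm Gc v w' = 0 := ih (a' + 1) b' v w' (by omega) hv hwb
    have h21 : herm Gc v' w = 0 := ih a' (b' + 1) v' w (by omega) hva hw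
    have hfv : f v = v' + l • v := by
      rw [hv']; simp
    have hfw : f w = w' + u • w := by
      rw [hw']; simp
    have key : herm Gc v w = herm Gc (f v) (f w) := by
      rw [hf]
      have := herm_invariant Gc Uc hU v w
      simp only [Matrix.toLin'_apply]
      exact this.symm
    rw [hfv, hfw] at key
    have expand : herm Gc (v' + l • v) (w' + u • w)
        = herm Gc v' w' + u * herm Gc v' w + (starRingEnd ℂ) l * herm Gc v w'
          + (starRingEnd ℂ) l * u * herm Gc v w := by
      simp only [herm, Matrix.mulVec_add, Matrix.mulVec_smul, dotProduct_add, dotProduct_smul,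
        star_add, star_smul, add_dotProduct, smul_dotProduct, smul_eq_mul, RingHom.id_apply,
        Complex.star_def]
      ring
    rw [expand, h11, h12, h21] at key
    have : (1 - (starRingEnd ℂ) l * u) * herm Gc v w = 0 := by linear_combination key
    rcases mul_eq_zero.mp this with h | h
    · exact absurd (by linear_combination -h) hlu
    · exact h


lemma isotropic_finrank_le_one (G : Matrix (Fin m) (Fin m) ℤ) (hdet : G.det ≠ 0)
    (hG : (G.map ((↑) : ℤ → ℝ)).IsHermitian)
    (hsig : (Finset.univ.filter fun i => 0 < hG.eigenvalues i).card = 1)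
    (W : Submodule ℂ (Fin m → ℂ))
    (hiso : ∀ x ∈ W, herm (G.map ((↑) : ℤ → ℂ)) x x = 0) :
    finrank ℂ W ≤ 1 := by
  classical
  set Gr : Matrix (Fin m) (Fin m) ℝ := G.map ((↑) : ℤ → ℝ) with hGr
  set Gc : Matrix (Fin m) (Fin m) ℂ := G.map ((↑) : ℤ → ℂ) with hGc
  set d : Fin m → ℝ := hG.eigenvalues with hd
  -- the positive index
  obtain ⟨i₀, hi₀⟩ := Finset.card_eq_one.mp hsig
  have hdi₀ : 0 < d i₀ := by
    have : i₀ ∈ Finset.univ.filter fun i => 0 < hG.eigenvalues i := by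
      rw [hi₀]; exact Finset.mem_singleton_self _
    simpa using this
  have hdetR : Gr.det ≠ 0 := by
    have : Gr.det = ((G.det : ℤ) : ℝ) := (RingHom.map_det (Int.castRingHom ℝ) G).symm
    rw [this]
    exact_mod_cast hdet
  have hdneg : ∀ i, i ≠ i₀ → d i < 0 := by
    intro i hi
    have hnotpos : ¬ (0 < d i) := by
      intro hpos
      have : i ∈ Finset.univ.filter fun j => 0 < hG.eigenvalues j := by simpa using hpos
      rw [hi₀, Finset.mem_singleton] at this
      exact hi this
    have hne : d i ≠ 0 := by
      intro h0
      apply hdetR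
      rw [hG.det_eq_prod_eigenvalues]
      exact Finset.prod_eq_zero (Finset.mem_univ i) (by exact_mod_cast h0)
    cases lt_or_eq_of_le (le_of_not_gt hnotpos) with
    | inl h => exact h
    | inr h => exact absurd h hne
  -- spectral data, complexified
  set V : Matrix (Fin m) (Fin m) ℝ := (hG.eigenvectorUnitary : Matrix (Fin m) (Fin m) ℝ) with hV
  set Vc : Matrix (Fin m) (Fin m) ℂ := V.map Complex.ofReal with hVc
  set Wc : Matrix (Fin m) (Fin m) ℂ := (star V).map Complex.ofReal with hWc
  have hmapmul : ∀ (A B : Matrix (Fin m) (Fin m) ℝ),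
      (A * B).map Complex.ofReal = A.map Complex.ofReal * B.map Complex.ofReal := by
    intro A B
    exact Matrix.map_mul (f := Complex.ofRealHom)
  have hspec : Gc = Vc * (Matrix.diagonal fun i => ((d i : ℝ) : ℂ)) * Wc := by
    have h1 : Gr = V * Matrix.diagonal (RCLike.ofReal ∘ d) * star V := hG.spectral_theorem
    have h2 : Gc = Gr.map Complex.ofReal := by
      ext i j
      simp [hGc, hGr, Matrix.map_apply]
    rw [h2, h1, hmapmul, hmapmul, Matrix.diagonal_map (by simp)]
    congr 1
  have hVW : Vc * Wc = 1 := by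
    rw [hVc, hWc, ← hmapmul, Matrix.mem_unitaryGroup_iff.mp hG.eigenvectorUnitary.2]
    exact Matrix.map_one _ Complex.ofReal_zero Complex.ofReal_one
  have hWcH : Wcᴴ = Vc := by
    ext i j
    simp [hWc, hVc, Matrix.conjTranspose_apply, Matrix.map_apply, Complex.conj_ofReal]
  -- the quadratic form in eigencoordinates
  have hquad : ∀ x : Fin m → ℂ, herm Gc x x
      = ((∑ i, d i * Complex.normSq ((Wc *ᵥ x) i) : ℝ) : ℂ) := by
    intro x
    set y : Fin m → ℂ := Wc *ᵥ x with hy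
    have h1 : herm Gc x x = star y ⬝ᵥ ((Matrix.diagonal fun i => ((d i : ℝ) : ℂ)) *ᵥ y) := by
      rw [herm, hspec]
      rw [← Matrix.mulVec_mulVec, ← Matrix.mulVec_mulVec, Matrix.dotProduct_mulVec (star x) Vc]
      congr 1
      rw [← hWcH, ← star_mulVec, hy]
    rw [h1]
    rw [dotProduct]
    push_cast
    apply Finset.sum_congr rfl
    intro i _
    rw [Matrix.mulVec_diagonal]
    simp only [Pi.star_apply, Complex.star_def]
    rw [Complex.normSq_eq_conj_mul_self]
    ring
  -- H is negative definite on the kernel of ℓ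
  set ℓ : (Fin m → ℂ) →ₗ[ℂ] ℂ := (LinearMap.proj i₀).comp (Matrix.mulVecLin Wc) with hℓ
  have hker : ∀ x : Fin m → ℂ, herm Gc x x = 0 → ℓ x = 0 → x = 0 := by
    intro x hx hlx
    set y : Fin m → ℂ := Wc *ᵥ x with hy
    have hy0 : y i₀ = 0 := hlx
    have hsum : (∑ i, d i * Complex.normSq (y i)) = 0 := by
      have := hquad x
      rw [hx] at this
      exact_mod_cast this.symm
    have hterm : ∀ i ∈ Finset.univ, d i * Complex.normSq (y i) = 0 := by
      apply Finset.sum_eq_zero_iff_of_nonpos _ |>.mp hsum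
      intro i _
      rcases eq_or_ne i i₀ with rfl | hi
      · rw [hy0]; simp
      · exact mul_nonpos_of_nonpos_of_nonneg (le_of_lt (hdneg i hi)) (Complex.normSq_nonneg _)
    have hyz : y = 0 := by
      funext i
      rcases eq_or_ne i i₀ with rfl | hi
      · exact hy0
      · have := hterm i (Finset.mem_univ i)
        have hnz : Complex.normSq (y i) = 0 := by
          rcases mul_eq_zero.mp this with h | h
          · exact absurd h (ne_of_lt (hdneg i hi))
          · exact h
        exact Complex.normSq_eq_zero.mp hnz
    have : x = (Vc * Wc) *ᵥ x := by rw [hVW, Matrix.one_mulVec]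
    rw [this, ← Matrix.mulVec_mulVec, ← hy, hyz, Matrix.mulVec_zero]
  -- rank-nullity
  have hkerbot : LinearMap.ker (ℓ.domRestrict W) = ⊥ := by
    rw [Submodule.eq_bot_iff]
    intro x hx
    rw [LinearMap.mem_ker, LinearMap.domRestrict_apply] at hx
    have := hker x.1 (hiso x.1 x.2) hx
    exact Subtype.ext this
  have := LinearMap.finrank_range_add_finrank_ker (ℓ.domRestrict W)
  rw [hkerbot, finrank_bot, add_zero] at this
  rw [← this]
  exact (Submodule.finrank_le _).trans (by simp)

end SalemAux

open SalemAux in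

/-- Let `L` be a free ℤ-module of finite rank with a nondegenerate symmetric bilinear form of
signature `(1, n)`, given by a Gram matrix `G` (an integer matrix, symmetric, with nonzero
determinant, whose associated real symmetric matrix has exactly one positive eigenvalue,
counted with multiplicity).  If `U` is an integer matrix with `Uᵀ * G * U = G` (an isometry
of the form), then the characteristic polynomial of `U` has at most one complex root of
absolute value greater than 1, counted with algebraic multiplicity, and any such root is
real.  This is the lattice-theoretic content of the theorem of McMullen and Esnault–Srinivas
on automorphisms of K3 surfaces. -/
theorem isometry_at_most_one_root_outside_unit_disk
    (m : ℕ) (G : Matrix (Fin m) (Fin m) ℤ) (hdet : G.det ≠ 0)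
    (hG : (G.map ((↑) : ℤ → ℝ)).IsHermitian)
    (hsig : (Finset.univ.filter fun i => 0 < hG.eigenvalues i).card = 1)
    (U : Matrix (Fin m) (Fin m) ℤ) (hU : U.transpose * G * U = G) :
    Multiset.card
      (((U.charpoly.map (Int.castRingHom ℂ)).roots).filter fun z => 1 < ‖z‖) ≤ 1 ∧
    ∀ z ∈ (U.charpoly.map (Int.castRingHom ℂ)).roots, 1 < ‖z‖ → z.im = 0 := by
  set q : Polynomial ℂ := U.charpoly.map (Int.castRingHom ℂ) with hq
  set Uc : Matrix (Fin m) (Fin m) ℂ := U.map ((↑) : ℤ → ℂ) with hUc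
  set Gc : Matrix (Fin m) (Fin m) ℂ := G.map ((↑) : ℤ → ℂ) with hGc
  have hqc : q = Uc.charpoly := (Matrix.charpoly_map U (Int.castRingHom ℂ)).symm
  have hq0 : q ≠ 0 := by
    rw [hqc]
    exact (Matrix.charpoly_monic Uc).ne_zero
  have hUcH : Ucᴴ = (U.transpose).map ((↑) : ℤ → ℂ) := by
    ext i j
    simp only [Matrix.conjTranspose_apply, Matrix.map_apply, Matrix.transpose_apply, hUc]
    exact map_intCast (starRingEnd ℂ) (U j i)
  have hGUc : Ucᴴ * Gc * Uc = Gc := by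
    have key := congrArg (fun M => (Int.castRingHom ℂ).mapMatrix M) hU
    simp only [_root_.map_mul, RingHom.mapMatrix_apply] at key
    rw [hUcH, hGc, hUc]
    exact Matrix.ext fun i j => congrFun (congrFun key i) j
  set f := Matrix.toLin' Uc with hf
  have hcount : ∀ z : ℂ, q.roots.count z = finrank ℂ (Module.End.maxGenEigenspace f z) := by
    intro z
    rw [hqc, count_roots, finrank_maxGen_eq_count]
  have hpair : ∀ a b : ℂ, 1 < ‖a‖ → 1 < ‖b‖ →
      ∀ v ∈ Module.End.maxGenEigenspace f a, ∀ w ∈ Module.End.maxGenEigenspace f b,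
      herm Gc v w = 0 := by
    intro a b ha hb v hv w hw
    obtain ⟨k, hk⟩ := (Module.End.mem_maxGenEigenspace f a v).mp hv
    obtain ⟨l, hl⟩ := (Module.End.mem_maxGenEigenspace f b w).mp hw
    have hne : (starRingEnd ℂ) a * b ≠ 1 := by
      intro h
      have h2 : ‖(starRingEnd ℂ) a * b‖ = 1 := by rw [h]; simp
      rw [norm_mul, Complex.norm_conj] at h2
      nlinarith
    exact pairing Gc Uc hGUc a b hne (k + l) k l v w le_rfl hk hl
  have part1 : Multiset.card (q.roots.filter fun z => 1 < ‖z‖) ≤ 1 := by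
    by_contra hcon
    push_neg at hcon
    set s := q.roots.filter fun z => 1 < ‖z‖ with hs
    have hcard : 2 ≤ Multiset.card s := hcon
    obtain ⟨a, ha⟩ : ∃ a, a ∈ s := Multiset.exists_mem_of_ne_zero (by
      intro h; rw [h] at hcard; simp at hcard)
    obtain ⟨b, hb⟩ : ∃ b, b ∈ s.erase a := Multiset.exists_mem_of_ne_zero (by
      intro h
      have := Multiset.card_erase_of_mem ha
      rw [h] at this
      simp at this
      omega)
    have ha2 : 1 < ‖a‖ := (Multiset.mem_filter.mp ha).2
    have ha1 : a ∈ q.roots := (Multiset.mem_filter.mp ha).1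
    have hbs : b ∈ s := Multiset.mem_of_mem_erase hb
    have hb2 : 1 < ‖b‖ := (Multiset.mem_filter.mp hbs).2
    have hb1 : b ∈ q.roots := (Multiset.mem_filter.mp hbs).1
    by_cases hab : a = b
    · -- one root with multiplicity at least two
      subst hab
      have h1 : 1 ≤ Multiset.count a (s.erase a) := Multiset.one_le_count_iff_mem.mpr hb
      have h2 : Multiset.count a (s.erase a) = Multiset.count a s - 1 :=
        Multiset.count_erase_self a s
      have h3 : Multiset.count a s = Multiset.count a q.roots := by
        rw [hs]
        exact Multiset.count_filter_of_pos ha2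
      have h4 : 2 ≤ Multiset.count a q.roots := by omega
      set W := Module.End.maxGenEigenspace f a with hW
      have hdim : 2 ≤ finrank ℂ W := by rw [← hcount a] at *; omega
      have hiso : ∀ x ∈ W, herm Gc x x = 0 := fun x hx => hpair a a ha2 ha2 x hx x hx
      have := isotropic_finrank_le_one G hdet hG hsig W hiso
      omega
    · -- two distinct roots
      set W := Module.End.maxGenEigenspace f a ⊔ Module.End.maxGenEigenspace f b with hW
      have hdisj : Disjoint (Module.End.maxGenEigenspace f a)
          (Module.End.maxGenEigenspace f b) :=
        Module.End.disjoint_genEigenspace f hab ⊤ ⊤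
      have hfa : 1 ≤ finrank ℂ (Module.End.maxGenEigenspace f a) := by
        rw [← hcount a]
        exact Multiset.one_le_count_iff_mem.mpr ha1
      have hfb : 1 ≤ finrank ℂ (Module.End.maxGenEigenspace f b) := by
        rw [← hcount b]
        exact Multiset.one_le_count_iff_mem.mpr hb1
      have hsum := Submodule.finrank_sup_add_finrank_inf_eq
        (Module.End.maxGenEigenspace f a) (Module.End.maxGenEigenspace f b)
      rw [hdisj.eq_bot, finrank_bot, add_zero] at hsum
      have hdim : 2 ≤ finrank ℂ W := by rw [hW, hsum]; omega
      have hiso : ∀ x ∈ W, herm Gc x x = 0 := by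
        intro x hx
        obtain ⟨p, hp, r, hr, rfl⟩ := Submodule.mem_sup.mp hx
        have hexp : herm Gc (p + r) (p + r)
            = herm Gc p p + herm Gc p r + herm Gc r p + herm Gc r r := by
          simp only [herm, Matrix.mulVec_add, dotProduct_add, star_add, add_dotProduct]
          ring
        rw [hexp, hpair a a ha2 ha2 p hp p hp, hpair a b ha2 hb2 p hp r hr,
          hpair b a hb2 ha2 r hr p hp, hpair b b hb2 hb2 r hr r hr]
        ring
      have := isotropic_finrank_le_one G hdet hG hsig W hiso
      omega
  refine ⟨part1, ?_⟩
  intro z hz habs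
  by_contra him
  have hzr : q.eval z = 0 := (mem_roots hq0).mp hz
  have hqstar : q.map (starRingEnd ℂ) = q := by
    rw [hq, Polynomial.map_map]
    congr 1
    exact RingHom.ext_int _ _
  have hconj_root : q.eval ((starRingEnd ℂ) z) = 0 := by
    conv_lhs => rw [← hqstar]
    rw [eval_map, Polynomial.eval₂_hom, hzr]
    simp
  have hconj_mem : (starRingEnd ℂ) z ∈ q.roots := (mem_roots hq0).mpr hconj_root
  set s := q.roots.filter fun z => 1 < ‖z‖ with hs
  have hzs : z ∈ s := Multiset.mem_filter.mpr ⟨hz, habs⟩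
  have hcs : (starRingEnd ℂ) z ∈ s :=
    Multiset.mem_filter.mpr ⟨hconj_mem, by rwa [Complex.norm_conj]⟩
  have hne : z ≠ (starRingEnd ℂ) z := by
    intro h
    exact him (Complex.conj_eq_iff_im.mp h.symm)
  have hsub : ({z, (starRingEnd ℂ) z} : Finset ℂ) ⊆ s.toFinset := by
    intro t ht
    rcases Finset.mem_insert.mp ht with rfl | ht
    · exact Multiset.mem_toFinset.mpr hzs
    · rw [Finset.mem_singleton] at ht
      subst ht
      exact Multiset.mem_toFinset.mpr hcs
  have h2 : 2 ≤ s.toFinset.card := by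
    rw [← Finset.card_pair hne]
    exact Finset.card_le_card hsub
  have h3 := Multiset.toFinset_card_le s
  omega
end
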